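/- Let d ≥ 1 and let a : (0, ∞) → (0, ∞) be continuous with ∫₀¹ dt/a(t) = ∞. Then for every s₀ > 0 and every q ∈ S^d, the unit sphere in ℝ^{d+1}, there exists t₀ ∈ (0, s₀) such that for every ω ∈ S^d there is a continuous, piecewise C¹ curve σ : [t₀, s₀] → S^d with σ(t₀) = ω, σ(s₀) = q, and ‖σ′(τ)‖ < 1/a(τ) at every τ at which σ is differentiable, where ‖·‖ is the Euclidean norm of ℝ^{d+1}. -/

import Mathlib

open Filter MeasureTheory
open ENNReal

lemma exists_t0 (a : ℝ → ℝ) (ha_pos : ∀ t > (0:ℝ), 0 < a t)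
    (ha_cont : ContinuousOn a (Set.Ioi 0))
    (ha_noPH : ∫⁻ t in Set.Ioc (0:ℝ) 1, ENNReal.ofReal (1 / a t) = ⊤)
    (b : ℝ) (hb0 : 0 < b) (hb1 : b ≤ 1) :
    ∃ t₀, 0 < t₀ ∧ t₀ < b ∧ Real.pi < ∫ x in t₀..b, 1 / a x := by
  set f : ℝ → ℝ≥0∞ := fun x => ENNReal.ofReal (1 / a x) with hf
  -- the lintegral over Ioc b 1 is finite
  have hinv_cont : ContinuousOn (fun x => 1 / a x) (Set.Ioi 0) :=
    continuousOn_const.div ha_cont (fun x hx => (ha_pos x hx).ne')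
  have hIcc : Set.Icc b 1 ⊆ Set.Ioi 0 := fun x hx => lt_of_lt_of_le hb0 hx.1
  have hfin : ∫⁻ x in Set.Ioc b 1, f x ≠ ⊤ := by
    obtain ⟨m, hm_mem, hm_min⟩ :=
      isCompact_Icc.exists_isMinOn (Set.nonempty_Icc.2 hb1) (ha_cont.mono hIcc)
    have hm_pos : 0 < a m := ha_pos m (hIcc hm_mem)
    have hb : ∀ x ∈ Set.Ioc b 1, f x ≤ ENNReal.ofReal (1 / a m) := by
      intro x hx
      apply ENNReal.ofReal_le_ofReal
      have hx' : x ∈ Set.Icc b 1 := ⟨le_of_lt hx.1, hx.2⟩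
      exact one_div_le_one_div_of_le hm_pos (hm_min hx')
    have hle : ∫⁻ x in Set.Ioc b 1, f x ≤ ENNReal.ofReal (1 / a m) * volume (Set.Ioc b 1) := by
      calc ∫⁻ x in Set.Ioc b 1, f x ≤ ∫⁻ _ in Set.Ioc b 1, ENNReal.ofReal (1 / a m) :=
            setLIntegral_mono measurable_const hb
        _ = ENNReal.ofReal (1 / a m) * volume (Set.Ioc b 1) := by
            simp [lintegral_const]
    exact ne_top_of_le_ne_top
      (ENNReal.mul_ne_top ENNReal.ofReal_ne_top (by simp [Real.volume_Ioc])) hle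
  -- hence the lintegral over Ioc 0 b is infinite
  have htop : ∫⁻ x in Set.Ioc 0 b, f x = ⊤ := by
    by_contra h
    have hsub : Set.Ioc (0:ℝ) 1 ⊆ Set.Ioc 0 b ∪ Set.Ioc b 1 := by
      intro x hx
      rcases le_or_gt x b with h' | h'
      · exact Or.inl ⟨hx.1, h'⟩
      · exact Or.inr ⟨h', hx.2⟩
    have := calc (⊤ : ℝ≥0∞) = ∫⁻ x in Set.Ioc (0:ℝ) 1, f x := ha_noPH.symm
      _ ≤ ∫⁻ x in Set.Ioc 0 b ∪ Set.Ioc b 1, f x := lintegral_mono_set hsub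
      _ ≤ (∫⁻ x in Set.Ioc 0 b, f x) + ∫⁻ x in Set.Ioc b 1, f x := lintegral_union_le _ _ _
    exact absurd (top_le_iff.mp this) (ENNReal.add_ne_top.2 ⟨h, hfin⟩)
  -- monotone convergence
  set t : ℕ → ℝ := fun n => b / (n + 2) with ht
  have ht_pos : ∀ n, 0 < t n := fun n => by positivity
  have ht_lt : ∀ n, t n < b := fun n => by
    rw [ht]
    rw [div_lt_iff₀ (by positivity)]
    nlinarith [hb0]
  have key : ∃ n : ℕ, ENNReal.ofReal Real.pi < ∫⁻ x in Set.Ioc (t n) b, f x := by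
    set μ := volume.restrict (Set.Ioc (0:ℝ) b) with hμ
    set g : ℕ → ℝ → ℝ≥0∞ := fun n => (Set.Ioc (t n) b).indicator f with hg
    have hf_meas : AEMeasurable f μ := by
      apply (ENNReal.continuous_ofReal.comp_continuousOn
        (hinv_cont.mono (fun x hx => hx.1 : Set.Ioc (0:ℝ) b ⊆ Set.Ioi 0))).aemeasurable
        measurableSet_Ioc
    have hg_meas : ∀ n, AEMeasurable (g n) μ := fun n =>
      hf_meas.indicator measurableSet_Ioc
    have hg_mono : Monotone g := by
      apply monotone_nat_of_le_succ
      intro n x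
      apply Set.indicator_le_indicator_of_subset
      · apply Set.Ioc_subset_Ioc_left
        apply div_le_div_of_nonneg_left (le_of_lt hb0) (by positivity)
        push_cast; linarith
      · intro _; exact zero_le
    have hg_sup : ∀ x, ⨆ n, g n x = (Set.Ioc (0:ℝ) b).indicator f x := by
      intro x
      by_cases hx : x ∈ Set.Ioc (0:ℝ) b
      · rw [Set.indicator_of_mem hx]
        apply le_antisymm
        · exact iSup_le fun n => Set.indicator_le_self _ _ x
        · obtain ⟨n, hn⟩ := exists_nat_gt (b / x)
          have : t n < x := by
            rw [ht, div_lt_iff₀ (by positivity)]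
            rw [div_lt_iff₀ hx.1] at hn
            nlinarith [hx.1]
          calc f x = g n x :=
                (Set.indicator_of_mem (show x ∈ Set.Ioc (t n) b from ⟨this, hx.2⟩) f).symm
            _ ≤ ⨆ n, g n x := le_iSup (g · x) n
      · have : ∀ n, g n x = 0 := fun n => Set.indicator_of_notMem
          (fun h => hx ⟨lt_trans (ht_pos n) h.1, h.2⟩) f
        simp [this, Set.indicator_of_notMem hx]
    have hmct := lintegral_iSup' hg_meas (Filter.Eventually.of_forall fun x => by
      intro i j hij; exact hg_mono hij x)
    have hrr : ∀ (s : Set ℝ), s ⊆ Set.Ioc (0:ℝ) b → MeasurableSet s →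
        ∫⁻ x, s.indicator f x ∂μ = ∫⁻ x in s, f x := by
      intro s hs hsm
      rw [lintegral_indicator hsm, hμ, Measure.restrict_restrict hsm,
        Set.inter_eq_self_of_subset_left hs]
    have h1 : ∫⁻ x, (fun x => ⨆ n, g n x) x ∂μ = ⊤ := by
      simp only [hg_sup]
      rw [hrr _ (le_refl _) measurableSet_Ioc]
      exact htop
    rw [hmct] at h1
    have h2 : ∀ n, ∫⁻ x, g n x ∂μ = ∫⁻ x in Set.Ioc (t n) b, f x := fun n =>
      hrr _ (Set.Ioc_subset_Ioc_left (le_of_lt (ht_pos n))) measurableSet_Ioc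
    simp only [h2] at h1
    have : ENNReal.ofReal Real.pi < ⨆ n, ∫⁻ x in Set.Ioc (t n) b, f x := by
      rw [h1]; exact ENNReal.ofReal_lt_top
    exact lt_iSup_iff.mp this
  obtain ⟨n, hn⟩ := key
  refine ⟨t n, ht_pos n, ht_lt n, ?_⟩
  have hint : IntegrableOn (fun x => 1 / a x) (Set.Ioc (t n) b) := by
    apply (ContinuousOn.integrableOn_Icc (hinv_cont.mono ?_)).mono_set Set.Ioc_subset_Icc_self
    intro x hx; exact lt_of_lt_of_le (ht_pos n) hx.1
  have hnn : 0 ≤ᵐ[volume.restrict (Set.Ioc (t n) b)] fun x => 1 / a x := by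
    apply ae_restrict_of_forall_mem measurableSet_Ioc
    intro x hx
    have := ha_pos x (lt_trans (ht_pos n) hx.1)
    positivity
  have := MeasureTheory.ofReal_integral_eq_lintegral_ofReal hint hnn
  rw [← this] at hn
  rw [intervalIntegral.integral_of_le (le_of_lt (ht_lt n))]
  exact (ENNReal.ofReal_lt_ofReal_iff_of_nonneg Real.pi_nonneg).mp hn

lemma exists_unit_orth (d : ℕ) (hd : 1 ≤ d) (q ω : EuclideanSpace ℝ (Fin (d+1)))
    (hq : ‖q‖ = 1) (hω : ‖ω‖ = 1) :
    ∃ u : EuclideanSpace ℝ (Fin (d+1)), ‖u‖ = 1 ∧ (inner ℝ q u : ℝ) = 0 ∧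
      ω = (inner ℝ ω q : ℝ) • q + Real.sin (Real.arccos (inner ℝ ω q : ℝ)) • u := by
  set c : ℝ := (inner ℝ ω q : ℝ) with hc
  have hc1 : |c| ≤ 1 := by
    have := abs_real_inner_le_norm ω q
    rwa [hω, hq, one_mul] at this
  set w : EuclideanSpace ℝ (Fin (d+1)) := ω - c • q with hw
  have hwsq : ‖w‖ ^ 2 = 1 - c ^ 2 := by
    rw [hw, norm_sub_sq_real, real_inner_smul_right, hω, norm_smul, hq]
    simp only [mul_one, ← hc]
    rw [Real.norm_eq_abs, sq_abs]
    ring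
  have hsin : Real.sin (Real.arccos c) = ‖w‖ := by
    rw [Real.sin_arccos, ← hwsq, Real.sqrt_sq (norm_nonneg _)]
  by_cases hw0 : w = 0
  · -- ω = c • q; pick any unit vector orthogonal to q
    have hq0 : q ≠ 0 := fun h => by simp [h] at hq
    have hbot : (ℝ ∙ q)ᗮ ≠ ⊥ := by
      intro h
      have h1 : Module.finrank ℝ (ℝ ∙ q) + Module.finrank ℝ (ℝ ∙ q)ᗮ
          = Module.finrank ℝ (EuclideanSpace ℝ (Fin (d+1))) :=
        Submodule.finrank_add_finrank_orthogonal _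
      rw [h, finrank_span_singleton hq0, finrank_euclideanSpace_fin] at h1
      simp at h1
      omega
    obtain ⟨v, hv_mem, hv0⟩ := Submodule.exists_mem_ne_zero_of_ne_bot hbot
    refine ⟨‖v‖⁻¹ • v, ?_, ?_, ?_⟩
    · rw [norm_smul, norm_inv, norm_norm, inv_mul_cancel₀ (norm_ne_zero_iff.2 hv0)]
    · rw [real_inner_smul_right,
        (Submodule.mem_orthogonal _ v).mp hv_mem q (Submodule.mem_span_singleton_self q),
        mul_zero]
    · rw [hsin, show ‖w‖ = 0 by rw [hw0, norm_zero], zero_smul, add_zero]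
      have : ω - c • q = 0 := hw0
      linear_combination (norm := module) this
  · refine ⟨‖w‖⁻¹ • w, ?_, ?_, ?_⟩
    · rw [norm_smul, norm_inv, norm_norm, inv_mul_cancel₀ (norm_ne_zero_iff.2 hw0)]
    · rw [real_inner_smul_right, hw, inner_sub_right, real_inner_smul_right,
        real_inner_self_eq_norm_sq, hq, real_inner_comm]
      simp [← hc]
    · rw [hsin, smul_smul, mul_inv_cancel₀ (norm_ne_zero_iff.2 hw0), one_smul, hw]
      abel

def PiecewiseC1SpeedLt {E : Type*} [NormedAddCommGroup E] [NormedSpace ℝ E]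
    (a : ℝ → ℝ) (σ : ℝ → E) (s b : ℝ) : Prop :=
  ∃ n : ℕ, ∃ t : ℕ → ℝ, 0 < n ∧ t 0 = s ∧ t n = b ∧ (∀ i, i < n → t i < t (i + 1)) ∧
    ∀ i, i < n → ∃ σ' : ℝ → E,
      ContinuousOn σ' (Set.Icc (t i) (t (i + 1))) ∧
      ∀ x ∈ Set.Icc (t i) (t (i + 1)),
        HasDerivWithinAt σ (σ' x) (Set.Icc (t i) (t (i + 1))) x ∧ ‖σ' x‖ < 1 / a x

theorem flrw_spherical_slice_in_timelike_past
    (d : ℕ) (hd : 1 ≤ d)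
    (a : ℝ → ℝ) (ha_pos : ∀ t > (0:ℝ), 0 < a t) (ha_cont : ContinuousOn a (Set.Ioi 0))
    (ha_noPH : ∫⁻ t in Set.Ioc (0:ℝ) 1, ENNReal.ofReal (1 / a t) = ⊤) :
    ∀ s₀ > (0:ℝ), ∀ q : EuclideanSpace ℝ (Fin (d + 1)), ‖q‖ = 1 →
      ∃ t₀ ∈ Set.Ioo (0:ℝ) s₀,
        ∀ ω : EuclideanSpace ℝ (Fin (d + 1)), ‖ω‖ = 1 →
          ∃ σ : ℝ → EuclideanSpace ℝ (Fin (d + 1)),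
            ContinuousOn σ (Set.Icc t₀ s₀) ∧
            σ t₀ = ω ∧ σ s₀ = q ∧
            (∀ τ ∈ Set.Icc t₀ s₀, ‖σ τ‖ = 1) ∧
            PiecewiseC1SpeedLt a σ t₀ s₀ := by
  intro s₀ hs₀ q hq
  set b := min s₀ 1 with hbdef
  have hb0 : 0 < b := lt_min hs₀ one_pos
  have hbs : b ≤ s₀ := min_le_left _ _
  obtain ⟨t₀, ht₀0, ht₀b, hIb⟩ := exists_t0 a ha_pos ha_cont ha_noPH b hb0 (min_le_right _ _)
  have ht₀s : t₀ < s₀ := lt_of_lt_of_le ht₀b hbs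
  refine ⟨t₀, ⟨ht₀0, ht₀s⟩, ?_⟩
  -- the extended speed bound r
  set r : ℝ → ℝ := fun x => 1 / a (max x t₀) with hrdef
  have hamax : ∀ x : ℝ, 0 < a (max x t₀) := fun x =>
    ha_pos _ (lt_of_lt_of_le ht₀0 (le_max_right x t₀))
  have hr_cont : Continuous r := by
    apply continuous_const.div
    · exact ha_cont.comp_continuous (continuous_id.max continuous_const)
        (fun x => lt_of_lt_of_le ht₀0 (le_max_right x t₀))
    · exact fun x => (hamax x).ne'
  have hr_pos : ∀ x, 0 < r x := fun x => one_div_pos.mpr (hamax x)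
  have hr_eq : ∀ x, t₀ ≤ x → r x = 1 / a x := fun x hx => by
    rw [hrdef]; simp [max_eq_left hx]
  -- F and its derivative
  set F : ℝ → ℝ := fun τ => ∫ x in t₀..τ, r x with hFdef
  have hF : ∀ τ, HasDerivAt F (r τ) τ := fun τ =>
    intervalIntegral.integral_hasDerivAt_right
      (hr_cont.intervalIntegrable _ _)
      hr_cont.stronglyMeasurable.stronglyMeasurableAtFilter
      hr_cont.continuousAt
  have hF_cont : Continuous F := continuous_iff_continuousAt.mpr fun τ => (hF τ).continuousAt
  have hFs₀ : Real.pi < F s₀ := by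
    have h1 : F b = ∫ x in t₀..b, 1 / a x := by
      apply intervalIntegral.integral_congr
      intro x hx
      rw [Set.uIcc_of_le ht₀b.le] at hx
      exact hr_eq x hx.1
    have h2 : F s₀ = F b + ∫ x in b..s₀, r x := by
      rw [hFdef]
      simp only
      rw [← intervalIntegral.integral_add_adjacent_intervals
        (hr_cont.intervalIntegrable t₀ b) (hr_cont.intervalIntegrable b s₀)]
    have h3 : 0 ≤ ∫ x in b..s₀, r x :=
      intervalIntegral.integral_nonneg hbs (fun x _ => (hr_pos x).le)
    rw [h2, h1]
    linarith
  have hF0 : 0 < F s₀ := Real.pi_pos.trans hFs₀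
  have hFt₀ : F t₀ = 0 := intervalIntegral.integral_same
  intro ω hω
  obtain ⟨u, hu1, hqu, hωeq⟩ := exists_unit_orth d hd q ω hq hω
  set c : ℝ := inner ℝ ω q with hc
  have hc1 : |c| ≤ 1 := by
    have := abs_real_inner_le_norm ω q
    rwa [hω, hq, one_mul] at this
  set α := Real.arccos c with hα
  have hα0 : 0 ≤ α := Real.arccos_nonneg c
  have hαπ : α ≤ Real.pi := Real.arccos_le_pi c
  set θ : ℝ → ℝ := fun τ => α - (α / F s₀) * F τ with hθ
  set θd : ℝ → ℝ := fun τ => -((α / F s₀) * r τ) with hθd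
  have hθAt : ∀ τ, HasDerivAt θ (θd τ) τ := fun τ =>
    ((hF τ).const_mul (α / F s₀)).const_sub α
  have hθ_cont : Continuous θ :=
    continuous_const.sub (continuous_const.mul hF_cont)
  set σc : ℝ → EuclideanSpace ℝ (Fin (d+1)) :=
    fun τ => Real.cos (θ τ) • q + Real.sin (θ τ) • u with hσ
  set σd : ℝ → EuclideanSpace ℝ (Fin (d+1)) :=
    fun τ => (-Real.sin (θ τ) * θd τ) • q + (Real.cos (θ τ) * θd τ) • u with hσdd
  have hσAt : ∀ τ, HasDerivAt σc (σd τ) τ := fun τ =>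
    (((hθAt τ).cos).smul_const q).add (((hθAt τ).sin).smul_const u)
  have hσ_cont : Continuous σc :=
    (((Real.continuous_cos.comp hθ_cont).smul continuous_const).add
      ((Real.continuous_sin.comp hθ_cont).smul continuous_const))
  have hσd_cont : Continuous σd :=
    ((((Real.continuous_sin.comp hθ_cont).neg.mul
        (continuous_const.mul hr_cont).neg).smul continuous_const).add
      (((Real.continuous_cos.comp hθ_cont).mul
        (continuous_const.mul hr_cont).neg).smul continuous_const))
  have hnorm : ∀ x y : ℝ, ‖x • q + y • u‖ = Real.sqrt (x ^ 2 + y ^ 2) := by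
    intro x y
    have h : ‖x • q + y • u‖ ^ 2 = x ^ 2 + y ^ 2 := by
      rw [norm_add_sq_real, real_inner_smul_left, real_inner_smul_right, hqu,
        norm_smul, norm_smul, hq, hu1]
      simp [Real.norm_eq_abs, sq_abs]
    rw [← h, Real.sqrt_sq (norm_nonneg _)]
  -- endpoint values
  have hθt₀ : θ t₀ = α := by rw [hθ]; simp [hFt₀]
  have hθs₀ : θ s₀ = 0 := by
    rw [hθ]; simp only
    rw [div_mul_cancel₀ α hF0.ne']
    ring
  have hσt₀ : σc t₀ = ω := by
    rw [hσ]; simp only [hθt₀]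
    rw [hα, Real.cos_arccos (neg_le_of_abs_le hc1) (le_of_abs_le hc1)]
    exact hωeq.symm
  have hσs₀ : σc s₀ = q := by
    rw [hσ]; simp [hθs₀]
  -- speed
  have hspeed : ∀ x, ‖σd x‖ = (α / F s₀) * r x := by
    intro x
    rw [hσdd]; simp only
    rw [hnorm]
    have h : (-Real.sin (θ x) * θd x) ^ 2 + (Real.cos (θ x) * θd x) ^ 2 = (θd x) ^ 2 := by
      have h2 := Real.sin_sq_add_cos_sq (θ x)
      nlinarith [h2]
    rw [h, Real.sqrt_sq_eq_abs, hθd]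
    simp only
    rw [abs_neg, abs_of_nonneg (mul_nonneg (div_nonneg hα0 hF0.le) (hr_pos x).le)]
  have hratio : α / F s₀ < 1 := (div_lt_one hF0).mpr (lt_of_le_of_lt hαπ hFs₀)
  refine ⟨σc, hσ_cont.continuousOn, hσt₀, hσs₀, ?_, ?_⟩
  · intro τ _
    rw [hσ]; simp only
    rw [hnorm, Real.cos_sq_add_sin_sq, Real.sqrt_one]
  · refine ⟨1, fun i => if i = 0 then t₀ else s₀, one_pos, if_pos rfl,
      if_neg one_ne_zero, ?_, ?_⟩
    · intro i hi
      interval_cases i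
      simpa using ht₀s
    · intro i hi
      interval_cases i
      simp only [if_pos rfl, if_neg one_ne_zero]
      refine ⟨σd, hσd_cont.continuousOn, ?_⟩
      intro x hx
      refine ⟨(hσAt x).hasDerivWithinAt, ?_⟩
      rw [hspeed, ← hr_eq x hx.1]
      exact mul_lt_of_lt_one_left (hr_pos x) hratio
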